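/- Let J be a linear PSD-preserving map on Hermitian matrices such that J(Q) is positive definite whenever Q is positive definite. Then the function d(Q) = trace(J(Q)⁻¹) is convex on positive definite matrices: d(αQ₁ + (1−α)Q₂) ≤ α d(Q₁) + (1−α) d(Q₂) for all α ∈ [0,1] and positive definite Q₁, Q₂. -/

import Mathlib

open ComplexOrder Matrix

private lemma trace_re_nonneg' {K : Type*} [Fintype K] [DecidableEq K]
    {A : Matrix K K ℂ} (h : A.PosSemidef) : 0 ≤ A.trace.re := by
  have hd : ∀ i, 0 ≤ (A i i).re := by
    intro i
    have h2 := h.dotProduct_mulVec_nonneg (Pi.single i 1)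
    have he : star (Pi.single i 1 : K → ℂ) ⬝ᵥ A *ᵥ Pi.single i 1 = A i i := by
      simp [dotProduct, mulVec, Pi.single_apply, Finset.sum_ite_eq]
    rw [he] at h2
    simpa using (Complex.le_def.mp h2).1
  simp only [Matrix.trace, Matrix.diag, Complex.re_sum]
  exact Finset.sum_nonneg fun i _ => hd i

private lemma key_ineq {K : Type*} [Fintype K] [DecidableEq K]
    (C X : Matrix K K ℂ) (hC : C.PosDef) :
    2 * X.trace.re - ((X * C * Xᴴ).trace).re ≤ ((C⁻¹).trace).re := by
  have hu : IsUnit C.det := (Matrix.isUnit_iff_isUnit_det _).mp hC.isUnit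
  have h1 : C * C⁻¹ = 1 := Matrix.mul_nonsing_inv _ hu
  have h2 : C⁻¹ * C = 1 := Matrix.nonsing_inv_mul _ hu
  have h3 : (C⁻¹)ᴴ = C⁻¹ := hC.isHermitian.inv.eq
  have hpsd : ((X - C⁻¹) * C * (X - C⁻¹)ᴴ).PosSemidef :=
    hC.posSemidef.mul_mul_conjTranspose_same _
  have hexp : (X - C⁻¹) * C * (X - C⁻¹)ᴴ = X * C * Xᴴ - X - Xᴴ + C⁻¹ := by
    have e2 : X * C * C⁻¹ = X := by rw [Matrix.mul_assoc, h1, Matrix.mul_one]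
    have e3 : C⁻¹ * C * Xᴴ = Xᴴ := by rw [h2, Matrix.one_mul]
    have e4 : C⁻¹ * C * C⁻¹ = C⁻¹ := by rw [h2, Matrix.one_mul]
    rw [conjTranspose_sub, h3]
    simp only [Matrix.sub_mul, Matrix.mul_sub]
    rw [e2, e3, e4]
    abel
  have h0 := trace_re_nonneg' hpsd
  rw [hexp] at h0
  rw [Matrix.trace_add, Matrix.trace_sub, Matrix.trace_sub, Matrix.trace_conjTranspose] at h0
  simp only [Complex.add_re, Complex.sub_re, RCLike.star_def, Complex.conj_re] at h0
  linarith

private lemma convex_posDef {n : Type*} [Fintype n] {Q₁ Q₂ : Matrix n n ℂ}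
    (h₁ : Q₁.PosDef) (h₂ : Q₂.PosDef) {α : ℝ} (h0 : 0 ≤ α) (h1 : α ≤ 1) :
    (α • Q₁ + (1 - α) • Q₂).PosDef := by
  refine posDef_iff_dotProduct_mulVec.mpr ⟨?_, ?_⟩
  · ext i j
    simp only [conjTranspose_apply, Matrix.add_apply, Matrix.smul_apply, star_add, star_smul,
      star_trivial]
    rw [h₁.isHermitian.apply, h₂.isHermitian.apply]
  · intro x hx
    have ha := h₁.dotProduct_mulVec_pos hx
    have hb := h₂.dotProduct_mulVec_pos hx
    have he : star x ⬝ᵥ (α • Q₁ + (1 - α) • Q₂) *ᵥ x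
        = α • (star x ⬝ᵥ Q₁ *ᵥ x) + (1 - α) • (star x ⬝ᵥ Q₂ *ᵥ x) := by
      rw [Matrix.add_mulVec, dotProduct_add, Matrix.smul_mulVec,
        Matrix.smul_mulVec, dotProduct_smul, dotProduct_smul]
    rw [he, Complex.lt_def]
    obtain ⟨ha1, ha2⟩ := Complex.lt_def.mp ha
    obtain ⟨hb1, hb2⟩ := Complex.lt_def.mp hb
    constructor
    · simp only [Complex.add_re, Complex.real_smul, Complex.mul_re, Complex.ofReal_re,
        Complex.ofReal_im, Complex.zero_re] at *
      rcases eq_or_lt_of_le h0 with heq | hpos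
      · nlinarith
      · nlinarith [mul_pos hpos ha1, mul_nonneg (sub_nonneg.mpr h1) hb1.le]
    · simp only [Complex.add_im, Complex.real_smul, Complex.mul_im, Complex.ofReal_re,
        Complex.ofReal_im, Complex.zero_im] at *
      rw [← ha2, ← hb2]
      ring

/-- Convexity of d(Q) = trace(J(Q)⁻¹) on positive definite matrices for a
linear PSD-preserving (and PD-preserving) map J. -/
theorem stmt4 {M K : Type*} [Fintype M] [DecidableEq M] [Fintype K] [DecidableEq K]
    (J : Matrix M M ℂ →ₗ[ℂ] Matrix K K ℂ)
    (hJ : ∀ Q : Matrix M M ℂ, Q.PosSemidef → (J Q).PosSemidef)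
    (hJpd : ∀ Q : Matrix M M ℂ, Q.PosDef → (J Q).PosDef)
    (Q₁ Q₂ : Matrix M M ℂ) (hQ₁ : Q₁.PosDef) (hQ₂ : Q₂.PosDef)
    (α : ℝ) (h0 : 0 ≤ α) (h1 : α ≤ 1) :
    (((J (α • Q₁ + (1 - α) • Q₂))⁻¹).trace).re
      ≤ α * (((J Q₁)⁻¹).trace).re + (1 - α) * (((J Q₂)⁻¹).trace).re := by
  set A := J Q₁ with hA
  set B := J Q₂ with hB
  have hApd : A.PosDef := hJpd _ hQ₁
  have hBpd : B.PosDef := hJpd _ hQ₂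
  have hJeq : J (α • Q₁ + (1 - α) • Q₂) = α • A + (1 - α) • B := by
    rw [map_add, LinearMap.map_smul_of_tower, LinearMap.map_smul_of_tower]
  set C : Matrix K K ℂ := α • A + (1 - α) • B with hCdef
  have hC : C.PosDef := hJeq ▸ hJpd _ (convex_posDef hQ₁ hQ₂ h0 h1)
  rw [hJeq]
  -- X₀ = C⁻¹
  set X : Matrix K K ℂ := C⁻¹ with hX
  have hu : IsUnit C.det := (Matrix.isUnit_iff_isUnit_det _).mp hC.isUnit
  have h2 : C⁻¹ * C = 1 := Matrix.nonsing_inv_mul _ hu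
  have h1' : C * C⁻¹ = 1 := Matrix.mul_nonsing_inv _ hu
  have hXH : Xᴴ = X := hC.isHermitian.inv.eq
  have hself : X * C * Xᴴ = C⁻¹ := by
    rw [hXH, hX, h2, Matrix.one_mul]
  have hsplit : X * C * Xᴴ = α • (X * A * Xᴴ) + (1 - α) • (X * B * Xᴴ) := by
    rw [hCdef]
    rw [Matrix.mul_add, Matrix.add_mul, mul_smul_comm, mul_smul_comm,
      smul_mul_assoc, smul_mul_assoc]
  have htr : ((C⁻¹).trace).re
      = α * ((X * A * Xᴴ).trace).re + (1 - α) * ((X * B * Xᴴ).trace).re := by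
    rw [← hself, hsplit, Matrix.trace_add, Matrix.trace_smul, Matrix.trace_smul]
    simp [Complex.real_smul, Complex.mul_re]
  have k1 := key_ineq A X hApd
  have k2 := key_ineq B X hBpd
  have hk1 := mul_le_mul_of_nonneg_left k1 h0
  have hk2 := mul_le_mul_of_nonneg_left k2 (by linarith : (0:ℝ) ≤ 1 - α)
  have hXtr : X.trace.re = ((C⁻¹).trace).re := by rw [hX]
  nlinarith [htr, hk1, hk2, hXtr]
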